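/- (Theorem 2, randomization at level 3) Let π ∈ (0,1) be such that πM is an integer, let w ∈ {0,1}^M have exactly (1−π)M coordinates equal to 1, and let z = w ⊗ 1_{KL} ∈ ℝ^{MKL} (so z_{jkl} = w_j). Let ρc, ρt be nonzero real numbers, let P be the MKL×MKL diagonal matrix whose (j,k,l) diagonal entry is 1/ρc if z_{jkl} = 0 and 1/ρt if z_{jkl} = 1, and let X be the MKL×2 matrix with first column 1_{MKL} and second column z. Assume λ1, λ2, λ3, λ4 > 0 and define Σ1 = Xᵀ P R^{−1} P X. Then Σ1 is invertible and the lower-right entry of Σ1^{−1} equals (λ3/(MKL)) · (ρc²/π + ρt²/(1−π)) + (λ4 − λ3)(ρc − ρt)²/(MKL). -/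

import Mathlib

open Matrix Polynomial Finset

noncomputable section

/-- Extended nested exchangeable correlation matrix: the ((j,k,l),(j',k',l')) entry equals
1 if (j,k,l)=(j',k',l'), `a0` if j=j', k=k', l≠l', `a1` if j=j', k≠k', and `a2` if j≠j'. -/
def Rmat (M K L : ℕ) (a0 a1 a2 : ℝ) :
    Matrix (Fin M × Fin K × Fin L) (Fin M × Fin K × Fin L) ℝ :=
  Matrix.of fun p q =>
    if p = q then 1
    else if p.1 = q.1 ∧ p.2.1 = q.2.1 then a0
    else if p.1 = q.1 then a1
    else a2

def lam1 (a0 : ℝ) : ℝ := 1 - a0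

def lam2 (L : ℕ) (a0 a1 : ℝ) : ℝ := 1 + ((L : ℝ) - 1) * a0 - (L : ℝ) * a1

def lam3 (K L : ℕ) (a0 a1 a2 : ℝ) : ℝ :=
  1 + ((L : ℝ) - 1) * a0 + (L : ℝ) * ((K : ℝ) - 1) * a1 - (L : ℝ) * (K : ℝ) * a2

def lam4 (M K L : ℕ) (a0 a1 a2 : ℝ) : ℝ :=
  1 + ((L : ℝ) - 1) * a0 + (L : ℝ) * ((K : ℝ) - 1) * a1
    + (L : ℝ) * (K : ℝ) * ((M : ℝ) - 1) * a2

namespace ModelBasedAux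

open Kronecker

/-- All-ones matrix. -/
def Jm (n : ℕ) : Matrix (Fin n) (Fin n) ℝ := Matrix.of fun _ _ => 1

lemma Jm_mul_Jm (n : ℕ) : Jm n * Jm n = (n : ℝ) • Jm n := by
  ext p q; simp [Jm, Matrix.mul_apply]

/-- Explicit inverse of `Rmat`. -/
def Smat (M K L : ℕ) (a0 a1 a2 : ℝ) :
    Matrix (Fin M × Fin K × Fin L) (Fin M × Fin K × Fin L) ℝ :=
  (1 / lam1 a0) • 1
  + ((1 / lam2 L a0 a1 - 1 / lam1 a0) / L) •
      ((1 : Matrix (Fin M) (Fin M) ℝ) ⊗ₖ ((1 : Matrix (Fin K) (Fin K) ℝ) ⊗ₖ Jm L))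
  + ((1 / lam3 K L a0 a1 a2 - 1 / lam2 L a0 a1) / (K * L)) •
      ((1 : Matrix (Fin M) (Fin M) ℝ) ⊗ₖ (Jm K ⊗ₖ Jm L))
  + ((1 / lam4 M K L a0 a1 a2 - 1 / lam3 K L a0 a1 a2) / (M * K * L)) •
      (Jm M ⊗ₖ (Jm K ⊗ₖ Jm L))

lemma Rmat_decomp (M K L : ℕ) (a0 a1 a2 : ℝ) : Rmat M K L a0 a1 a2 =
      (1 - a0) • (1 : Matrix (Fin M × Fin K × Fin L) (Fin M × Fin K × Fin L) ℝ)
      + (a0 - a1) • ((1 : Matrix (Fin M) (Fin M) ℝ) ⊗ₖ ((1 : Matrix (Fin K) (Fin K) ℝ) ⊗ₖ Jm L))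
      + (a1 - a2) • ((1 : Matrix (Fin M) (Fin M) ℝ) ⊗ₖ (Jm K ⊗ₖ Jm L))
      + a2 • (Jm M ⊗ₖ (Jm K ⊗ₖ Jm L)) := by
  ext ⟨p1, p2, p3⟩ ⟨q1, q2, q3⟩
  simp only [Rmat, Matrix.of_apply, Matrix.add_apply, Matrix.smul_apply, Matrix.kroneckerMap_apply,
    Matrix.one_apply, Jm, smul_eq_mul, Prod.mk.injEq]
  by_cases h1 : p1 = q1 <;> by_cases h2 : p2 = q2 <;> by_cases h3 : p3 = q3 <;>
    simp [h1, h2, h3]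

lemma R_mul_S (M K L : ℕ) (a0 a1 a2 : ℝ) (hl1 : lam1 a0 ≠ 0) (hl2 : lam2 L a0 a1 ≠ 0)
    (hl3 : lam3 K L a0 a1 a2 ≠ 0) (hl4 : lam4 M K L a0 a1 a2 ≠ 0)
    (hM : 0 < M) (hK : 0 < K) (hL : 0 < L) :
    Rmat M K L a0 a1 a2 * Smat M K L a0 a1 a2 = 1 := by
  have hM' : (M : ℝ) ≠ 0 := Nat.cast_ne_zero.mpr hM.ne'
  have hK' : (K : ℝ) ≠ 0 := Nat.cast_ne_zero.mpr hK.ne'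
  have hL' : (L : ℝ) ≠ 0 := Nat.cast_ne_zero.mpr hL.ne'
  rw [Rmat_decomp, Smat]
  simp only [Matrix.add_mul, Matrix.mul_add, Matrix.smul_mul, Matrix.mul_smul,
    ← Matrix.mul_kronecker_mul, Matrix.one_mul, Matrix.mul_one, Jm_mul_Jm,
    Matrix.smul_kronecker, Matrix.kronecker_smul, Matrix.one_kronecker_one, smul_smul]
  match_scalars <;>
    (field_simp; simp only [lam1, lam2, lam3, lam4]; try ring)

lemma D1 (M K L : ℕ) (f g : Fin M → ℝ) :
    ∑ p : Fin M × Fin K × Fin L, ∑ q : Fin M × Fin K × Fin L,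
      f p.1 * ((1 : Matrix (Fin M × Fin K × Fin L) (Fin M × Fin K × Fin L) ℝ) p q) * g q.1
      = ((K : ℝ) * L) * ∑ j, f j * g j := by
  simp [Matrix.one_apply, mul_ite, ite_mul, mul_zero, zero_mul, Finset.sum_ite_eq,
    Fintype.sum_prod_type, Finset.sum_const, Finset.card_univ, nsmul_eq_mul, Finset.mul_sum]

lemma D2 (M K L : ℕ) (f g : Fin M → ℝ) :
    ∑ p : Fin M × Fin K × Fin L, ∑ q : Fin M × Fin K × Fin L,
      f p.1 * (((1 : Matrix (Fin M) (Fin M) ℝ) ⊗ₖ ((1 : Matrix (Fin K) (Fin K) ℝ) ⊗ₖ Jm L)) p q) * g q.1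
      = ((K : ℝ) * (L : ℝ) ^ 2) * ∑ j, f j * g j := by
  simp [Matrix.kroneckerMap_apply, Matrix.one_apply, Jm, mul_ite, ite_mul, mul_zero, zero_mul,
    mul_one, one_mul, Finset.sum_ite_eq, Fintype.sum_prod_type, Finset.sum_const,
    Finset.card_univ, nsmul_eq_mul, Finset.mul_sum]
  ring_nf

lemma D3 (M K L : ℕ) (f g : Fin M → ℝ) :
    ∑ p : Fin M × Fin K × Fin L, ∑ q : Fin M × Fin K × Fin L,
      f p.1 * (((1 : Matrix (Fin M) (Fin M) ℝ) ⊗ₖ (Jm K ⊗ₖ Jm L)) p q) * g q.1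
      = (((K : ℝ) * L) ^ 2) * ∑ j, f j * g j := by
  simp [Matrix.kroneckerMap_apply, Matrix.one_apply, Jm, mul_ite, ite_mul, mul_zero, zero_mul,
    mul_one, one_mul, Finset.sum_ite_eq, Fintype.sum_prod_type, Finset.sum_const,
    Finset.card_univ, nsmul_eq_mul, Finset.mul_sum]
  ring_nf

lemma D4 (M K L : ℕ) (f g : Fin M → ℝ) :
    ∑ p : Fin M × Fin K × Fin L, ∑ q : Fin M × Fin K × Fin L,
      f p.1 * ((Jm M ⊗ₖ (Jm K ⊗ₖ Jm L)) p q) * g q.1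
      = (((K : ℝ) * L) * ∑ j, f j) * (((K : ℝ) * L) * ∑ j, g j) := by
  simp [Matrix.kroneckerMap_apply, Jm, mul_one, one_mul, Fintype.sum_prod_type,
    Finset.sum_const, Finset.card_univ, nsmul_eq_mul, Finset.mul_sum, Finset.sum_mul]
  ring_nf
  rw [Finset.sum_comm]

lemma Sig_expand (M K L : ℕ) (a0 a1 a2 : ℝ) (f g : Fin M → ℝ) :
    ∑ p : Fin M × Fin K × Fin L, ∑ q : Fin M × Fin K × Fin L,
      f p.1 * (Smat M K L a0 a1 a2 p q) * g q.1
      = (1 / lam1 a0) * (((K : ℝ) * L) * ∑ j, f j * g j)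
        + ((1 / lam2 L a0 a1 - 1 / lam1 a0) / L) * (((K : ℝ) * (L : ℝ) ^ 2) * ∑ j, f j * g j)
        + ((1 / lam3 K L a0 a1 a2 - 1 / lam2 L a0 a1) / (K * L)) *
            ((((K : ℝ) * L) ^ 2) * ∑ j, f j * g j)
        + ((1 / lam4 M K L a0 a1 a2 - 1 / lam3 K L a0 a1 a2) / (M * K * L)) *
            ((((K : ℝ) * L) * ∑ j, f j) * (((K : ℝ) * L) * ∑ j, g j)) := by
  have e : ∀ p q : Fin M × Fin K × Fin L,
      f p.1 * (Smat M K L a0 a1 a2 p q) * g q.1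
      = (1 / lam1 a0) *
          (f p.1 * ((1 : Matrix (Fin M × Fin K × Fin L) (Fin M × Fin K × Fin L) ℝ) p q) * g q.1)
        + ((1 / lam2 L a0 a1 - 1 / lam1 a0) / L) *
          (f p.1 * (((1 : Matrix (Fin M) (Fin M) ℝ) ⊗ₖ
            ((1 : Matrix (Fin K) (Fin K) ℝ) ⊗ₖ Jm L)) p q) * g q.1)
        + ((1 / lam3 K L a0 a1 a2 - 1 / lam2 L a0 a1) / (K * L)) *
          (f p.1 * (((1 : Matrix (Fin M) (Fin M) ℝ) ⊗ₖ (Jm K ⊗ₖ Jm L)) p q) * g q.1)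
        + ((1 / lam4 M K L a0 a1 a2 - 1 / lam3 K L a0 a1 a2) / (M * K * L)) *
          (f p.1 * ((Jm M ⊗ₖ (Jm K ⊗ₖ Jm L)) p q) * g q.1) := by
    intro p q
    simp only [Smat, Matrix.add_apply, Matrix.smul_apply, smul_eq_mul]
    ring
  simp only [e, Finset.sum_add_distrib, ← Finset.mul_sum]
  rw [D1, D2, D3, D4]

lemma sumW {M : ℕ} (w : Fin M → ℝ) (hw : ∀ j, w j = 0 ∨ w j = 1) (a b : ℝ) :
    ∑ j, (if w j = 0 then a else b)
      = ((M : ℝ) - ((Finset.univ.filter fun j => w j = 1).card : ℝ)) * a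
        + ((Finset.univ.filter fun j => w j = 1).card : ℝ) * b := by
  classical
  rw [← Finset.sum_filter_add_sum_filter_not Finset.univ (fun j => w j = 1)]
  have e1 : ∑ j ∈ Finset.univ.filter fun j => w j = 1, (if w j = 0 then a else b)
      = ((Finset.univ.filter fun j => w j = 1).card : ℝ) * b := by
    rw [Finset.sum_congr rfl fun j hj => ?_, Finset.sum_const, nsmul_eq_mul]
    have hj1 : w j = 1 := (Finset.mem_filter.mp hj).2
    rw [if_neg (by rw [hj1]; norm_num)]
  have e2 : ∑ j ∈ Finset.univ.filter fun j => ¬ w j = 1, (if w j = 0 then a else b)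
      = ((Finset.univ.filter fun j => ¬ w j = 1).card : ℝ) * a := by
    rw [Finset.sum_congr rfl fun j hj => ?_, Finset.sum_const, nsmul_eq_mul]
    have hj1 : ¬ w j = 1 := (Finset.mem_filter.mp hj).2
    rw [if_pos ((hw j).resolve_right hj1)]
  rw [e1, e2]
  have hcards : (Finset.univ.filter fun j => w j = 1).card
      + (Finset.univ.filter fun j => ¬ w j = 1).card = M := by
    rw [Finset.card_filter_add_card_filter_not, Finset.card_univ, Fintype.card_fin]
  have : ((Finset.univ.filter fun j => ¬ w j = 1).card : ℝ)
      = (M : ℝ) - ((Finset.univ.filter fun j => w j = 1).card : ℝ) := by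
    have := congrArg (fun n : ℕ => (n : ℝ)) hcards
    push_cast at this
    linarith
  rw [this]
  ring

end ModelBasedAux
open ModelBasedAux

set_option maxHeartbeats 1000000

/-- Theorem 2, randomization at level 3. -/
theorem model_based_variance_level3 (M K L : ℕ) (hM : 2 ≤ M) (hK : 2 ≤ K) (hL : 2 ≤ L)
    (a0 a1 a2 : ℝ) (π ρc ρt : ℝ)
    (hπ : π ∈ Set.Ioo (0 : ℝ) 1) (hρc : ρc ≠ 0) (hρt : ρt ≠ 0)
    (w : Fin M → ℝ) (hw : ∀ j, w j = 0 ∨ w j = 1)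
    (hcard : ((Finset.univ.filter fun j => w j = 1).card : ℝ) = (1 - π) * (M : ℝ))
    (h1 : 0 < lam1 a0) (h2 : 0 < lam2 L a0 a1)
    (h3 : 0 < lam3 K L a0 a1 a2) (h4 : 0 < lam4 M K L a0 a1 a2)
    (P : Matrix (Fin M × Fin K × Fin L) (Fin M × Fin K × Fin L) ℝ)
    (hP : P = Matrix.diagonal fun p => if w p.1 = 0 then 1 / ρc else 1 / ρt)
    (X : Matrix (Fin M × Fin K × Fin L) (Fin 2) ℝ)
    (hX : X = Matrix.of fun p i => if i = 0 then 1 else w p.1)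
    (Sig1 : Matrix (Fin 2) (Fin 2) ℝ)
    (hSig1 : Sig1 = Xᵀ * P * (Rmat M K L a0 a1 a2)⁻¹ * P * X) :
    IsUnit Sig1 ∧
    Sig1⁻¹ 1 1 = lam3 K L a0 a1 a2 / ((M : ℝ) * (K : ℝ) * (L : ℝ)) *
        (ρc ^ 2 / π + ρt ^ 2 / (1 - π))
      + (lam4 M K L a0 a1 a2 - lam3 K L a0 a1 a2) * (ρc - ρt) ^ 2 /
        ((M : ℝ) * (K : ℝ) * (L : ℝ)) := by
  obtain ⟨hπ0, hπ1⟩ := hπ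
  have h1π : (0:ℝ) < 1 - π := by linarith
  have hM0 : 0 < M := by omega
  have hK0 : 0 < K := by omega
  have hL0 : 0 < L := by omega
  have hMR : (0:ℝ) < (M:ℝ) := by exact_mod_cast hM0
  have hKR : (0:ℝ) < (K:ℝ) := by exact_mod_cast hK0
  have hLR : (0:ℝ) < (L:ℝ) := by exact_mod_cast hL0
  -- the inverse of R
  have hRinv : (Rmat M K L a0 a1 a2)⁻¹ = Smat M K L a0 a1 a2 :=
    Matrix.inv_eq_right_inv (R_mul_S M K L a0 a1 a2 h1.ne' h2.ne' h3.ne' h4.ne' hM0 hK0 hL0)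
  -- columns of P * X, as functions of the first coordinate
  set dd : Fin M → ℝ := fun j => if w j = 0 then 1 / ρc else 1 / ρt with hdd
  set h : Fin 2 → Fin M → ℝ := fun i j => dd j * (if i = 0 then 1 else w j) with hh
  have hY : ∀ (p : Fin M × Fin K × Fin L) (i : Fin 2), (P * X) p i = h i p.1 := by
    intro p i
    rw [hP, hX, Matrix.diagonal_mul]
    rfl
  -- entries of Sig1 as double sums
  have hentry : ∀ i i' : Fin 2, Sig1 i i'
      = ∑ p : Fin M × Fin K × Fin L, ∑ q : Fin M × Fin K × Fin L,
          h i p.1 * (Smat M K L a0 a1 a2 p q) * h i' q.1 := by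
    intro i i'
    have hPt : Pᵀ = P := by rw [hP]; exact Matrix.diagonal_transpose _
    have hre : Xᵀ * P * (Rmat M K L a0 a1 a2)⁻¹ * P * X
        = (P * X)ᵀ * (Smat M K L a0 a1 a2 * (P * X)) := by
      rw [hRinv, Matrix.transpose_mul, hPt]
      simp only [Matrix.mul_assoc]
    rw [hSig1, hre, Matrix.mul_apply]
    simp only [Matrix.transpose_apply, Matrix.mul_apply, hY, Finset.mul_sum]
    exact Finset.sum_congr rfl fun _ _ => Finset.sum_congr rfl fun _ _ => by ring
  -- abbreviations for eigenvalues and cell count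
  set l1 : ℝ := lam1 a0 with hl1
  set l2 : ℝ := lam2 L a0 a1 with hl2
  set l3 : ℝ := lam3 K L a0 a1 a2 with hl3
  set l4 : ℝ := lam4 M K L a0 a1 a2 with hl4
  set mR : ℝ := ((Finset.univ.filter fun j => w j = 1).card : ℝ) with hmR
  have hl1' : l1 ≠ 0 := h1.ne'
  have hl2' : l2 ≠ 0 := h2.ne'
  have hl3' : l3 ≠ 0 := h3.ne'
  have hl4' : l4 ≠ 0 := h4.ne'
  have hπ' : π ≠ 0 := hπ0.ne'
  have h1π' : (1:ℝ) - π ≠ 0 := h1π.ne'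
  have hM' : (M:ℝ) ≠ 0 := hMR.ne'
  have hK' : (K:ℝ) ≠ 0 := hKR.ne'
  have hL' : (L:ℝ) ≠ 0 := hLR.ne'
  -- simplification of the coefficient combination
  have C : ∀ T Si Sj : ℝ,
      (1 / l1) * (((K : ℝ) * L) * T)
        + ((1 / l2 - 1 / l1) / L) * (((K : ℝ) * (L : ℝ) ^ 2) * T)
        + ((1 / l3 - 1 / l2) / (K * L)) * ((((K : ℝ) * L) ^ 2) * T)
        + ((1 / l4 - 1 / l3) / (M * K * L)) * ((((K : ℝ) * L) * Si) * (((K : ℝ) * L) * Sj))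
      = ((K : ℝ) * L) * T / l3
        + ((K : ℝ) * L) * (l3 - l4) * (Si * Sj) / ((M : ℝ) * l3 * l4) := by
    intro T Si Sj
    field_simp
    ring
  -- the sums over j
  have sum00 : ∑ j, h 0 j * h 0 j
      = ((M:ℝ) - mR) * (1/ρc * (1/ρc)) + mR * (1/ρt * (1/ρt)) := by
    rw [← sumW w hw (1/ρc * (1/ρc)) (1/ρt * (1/ρt))]
    refine Finset.sum_congr rfl fun j _ => ?_
    by_cases hj : w j = 0 <;> simp [hh, hdd, hj]
  have sum01 : ∑ j, h 0 j * h 1 j = mR * (1/ρt * (1/ρt)) := by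
    have e : ∑ j, h 0 j * h 1 j = ((M:ℝ) - mR) * 0 + mR * (1/ρt * (1/ρt)) := by
      rw [← sumW w hw 0 (1/ρt * (1/ρt))]
      refine Finset.sum_congr rfl fun j _ => ?_
      rcases hw j with hj | hj <;> simp [hh, hdd, hj]
    rw [e]; ring
  have sum10 : ∑ j, h 1 j * h 0 j = mR * (1/ρt * (1/ρt)) := by
    rw [show (∑ j, h 1 j * h 0 j) = ∑ j, h 0 j * h 1 j from
      Finset.sum_congr rfl fun _ _ => by ring]
    exact sum01
  have sum11 : ∑ j, h 1 j * h 1 j = mR * (1/ρt * (1/ρt)) := by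
    have e : ∑ j, h 1 j * h 1 j = ((M:ℝ) - mR) * 0 + mR * (1/ρt * (1/ρt)) := by
      rw [← sumW w hw 0 (1/ρt * (1/ρt))]
      refine Finset.sum_congr rfl fun j _ => ?_
      rcases hw j with hj | hj <;> simp [hh, hdd, hj]
    rw [e]; ring
  have sum0 : ∑ j, h 0 j = ((M:ℝ) - mR) * (1/ρc) + mR * (1/ρt) := by
    rw [← sumW w hw (1/ρc) (1/ρt)]
    refine Finset.sum_congr rfl fun j _ => ?_
    by_cases hj : w j = 0 <;> simp [hh, hdd, hj]
  have sum1 : ∑ j, h 1 j = mR * (1/ρt) := by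
    have e : ∑ j, h 1 j = ((M:ℝ) - mR) * 0 + mR * (1/ρt) := by
      rw [← sumW w hw 0 (1/ρt)]
      refine Finset.sum_congr rfl fun j _ => ?_
      rcases hw j with hj | hj <;> simp [hh, hdd, hj]
    rw [e]; ring
  -- explicit entries, in compact form
  have E00 : Sig1 0 0
      = ((K : ℝ) * L) * (((M:ℝ) - mR) * (1/ρc * (1/ρc)) + mR * (1/ρt * (1/ρt))) / l3
        + ((K : ℝ) * L) * (l3 - l4) *
            ((((M:ℝ) - mR) * (1/ρc) + mR * (1/ρt)) * (((M:ℝ) - mR) * (1/ρc) + mR * (1/ρt)))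
            / ((M : ℝ) * l3 * l4) := by
    rw [hentry 0 0, Sig_expand, sum00, sum0]
    exact C _ _ _
  have E01 : Sig1 0 1
      = ((K : ℝ) * L) * (mR * (1/ρt * (1/ρt))) / l3
        + ((K : ℝ) * L) * (l3 - l4) *
            ((((M:ℝ) - mR) * (1/ρc) + mR * (1/ρt)) * (mR * (1/ρt)))
            / ((M : ℝ) * l3 * l4) := by
    rw [hentry 0 1, Sig_expand, sum01, sum0, sum1]
    exact C _ _ _
  have E10 : Sig1 1 0
      = ((K : ℝ) * L) * (mR * (1/ρt * (1/ρt))) / l3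
        + ((K : ℝ) * L) * (l3 - l4) *
            ((mR * (1/ρt)) * (((M:ℝ) - mR) * (1/ρc) + mR * (1/ρt)))
            / ((M : ℝ) * l3 * l4) := by
    rw [hentry 1 0, Sig_expand, sum10, sum0, sum1]
    exact C _ _ _
  have E11 : Sig1 1 1
      = ((K : ℝ) * L) * (mR * (1/ρt * (1/ρt))) / l3
        + ((K : ℝ) * L) * (l3 - l4) * ((mR * (1/ρt)) * (mR * (1/ρt)))
            / ((M : ℝ) * l3 * l4) := by
    rw [hentry 1 1, Sig_expand, sum11, sum1]
    exact C _ _ _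
  -- substitute the cardinality
  have hmR' : mR = (1 - π) * (M : ℝ) := hcard
  -- determinant
  have hdet : Sig1.det
      = ((K:ℝ) * L) ^ 2 * ((π * M) * ((1 - π) * M)) / (l3 * l4 * ρc ^ 2 * ρt ^ 2) := by
    rw [Matrix.det_fin_two, E00, E01, E10, E11, hmR']
    field_simp
    ring
  have hdet0 : Sig1.det ≠ 0 := by
    rw [hdet]
    have hnum : (0:ℝ) < ((K:ℝ) * L) ^ 2 * ((π * M) * ((1 - π) * M)) :=
      mul_pos (pow_pos (mul_pos hKR hLR) 2)
        (mul_pos (mul_pos hπ0 hMR) (mul_pos h1π hMR))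
    have hden : (0:ℝ) < l3 * l4 * ρc ^ 2 * ρt ^ 2 :=
      mul_pos (mul_pos (mul_pos h3 h4) (pow_two_pos_of_ne_zero hρc))
        (pow_two_pos_of_ne_zero hρt)
    exact div_ne_zero hnum.ne' hden.ne'
  refine ⟨(Matrix.isUnit_iff_isUnit_det _).mpr (isUnit_iff_ne_zero.mpr hdet0), ?_⟩
  -- the (1,1) entry of the inverse
  have hinv : Sig1⁻¹ 1 1 = Sig1.det⁻¹ * Sig1 0 0 := by
    rw [Matrix.inv_def, Matrix.adjugate_fin_two, Ring.inverse_eq_inv]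
    simp [Matrix.smul_apply]
  rw [hinv, hdet, E00, hmR']
  field_simp
  ring
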